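/- For α ∈ (2,3), define K'(x) = ∫₀¹ sin(xξ)/ξ^{α−1} dξ for x > 0. Then K'(x) ≥ sin(x) and K'(x) ≥ (1−cos x)/x for all x > 0. Specifically: for x ≤ 2π/3, K'(x) ≥ sin x ≥ (1−cos x)/x since sin(xξ)/ξ^{α−1} is decreasing in ξ on (0,1]; and for x > 2π/3, K'(x) = x^{α−2}∫₀^x sin(t)/t^{α−1} dt > (2π/3)^{α−2} Si(2π) ≥ max{1, 3/π} ≥ max{sin x, (1−cos x)/x}. -/

import Mathlib

open Real MeasureTheory intervalIntegral Filter Set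

section Aux

lemma nonneg_of_deriv_nonneg' {f f' : ℝ → ℝ}
    (hd : ∀ t, HasDerivAt f (f' t) t) (h0 : f 0 = 0)
    (h' : ∀ t, 0 ≤ t → 0 ≤ f' t) : ∀ t, 0 ≤ t → 0 ≤ f t := by
  intro t ht
  have hmono : MonotoneOn f (Set.Ici 0) := by
    apply monotoneOn_of_deriv_nonneg (convex_Ici 0)
      (fun s _ => (hd s).continuousAt.continuousWithinAt)
      (fun s hs => (hd s).differentiableAt.differentiableWithinAt)
    intro s hs
    rw [interior_Ici] at hs
    rw [(hd s).deriv]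
    exact h' s (le_of_lt hs)
  calc (0:ℝ) = f 0 := h0.symm
  _ ≤ f t := hmono Set.self_mem_Ici ht ht

lemma sin_ge_cubic : ∀ t : ℝ, 0 ≤ t → t - t^3/6 ≤ Real.sin t := by
  have := nonneg_of_deriv_nonneg' (f := fun t => Real.sin t - (t - t^3/6))
    (f' := fun t => Real.cos t - (1 - t^2/2))
    (fun t => by
      have h1 := Real.hasDerivAt_sin t
      have h2 : HasDerivAt (fun t : ℝ => t - t^3/6) (1 - t^2/2) t := by
        have := ((hasDerivAt_id t).sub (((hasDerivAt_pow 3 t)).div_const 6))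
        exact this.congr_deriv (by push_cast; ring)
      exact h1.sub h2)
    (by simp)
    (fun t _ => by have := Real.one_sub_sq_div_two_le_cos (x := t); linarith)
  intro t ht; have := this t ht; simpa using by linarith [this]

lemma cos_le_quartic : ∀ t : ℝ, 0 ≤ t → Real.cos t ≤ 1 - t^2/2 + t^4/24 := by
  have := nonneg_of_deriv_nonneg' (f := fun t => (1 - t^2/2 + t^4/24) - Real.cos t)
    (f' := fun t => Real.sin t - (t - t^3/6))
    (fun t => by
      have h1 := Real.hasDerivAt_cos t
      have h2 : HasDerivAt (fun t : ℝ => 1 - t^2/2 + t^4/24) (-(t - t^3/6)) t := by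
        have := (((hasDerivAt_const t (1:ℝ)).sub ((hasDerivAt_pow 2 t).div_const 2)).add
          ((hasDerivAt_pow 4 t).div_const 24))
        exact this.congr_deriv (by push_cast; ring)
      have := h2.sub h1
      exact this.congr_deriv (by ring))
    (by simp)
    (fun t ht => by have := sin_ge_cubic t ht; linarith)
  intro t ht; have := this t ht; linarith [this]

lemma sin_le_quintic : ∀ t : ℝ, 0 ≤ t → Real.sin t ≤ t - t^3/6 + t^5/120 := by
  have := nonneg_of_deriv_nonneg' (f := fun t => (t - t^3/6 + t^5/120) - Real.sin t)
    (f' := fun t => (1 - t^2/2 + t^4/24) - Real.cos t)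
    (fun t => by
      have h1 := Real.hasDerivAt_sin t
      have h2 : HasDerivAt (fun t : ℝ => t - t^3/6 + t^5/120) (1 - t^2/2 + t^4/24) t := by
        have := (((hasDerivAt_id t).sub ((hasDerivAt_pow 3 t).div_const 6)).add
          ((hasDerivAt_pow 5 t).div_const 120))
        exact this.congr_deriv (by push_cast; ring)
      exact h2.sub h1)
    (by simp)
    (fun t ht => by have := cos_le_quartic t ht; linarith)
  intro t ht; have := this t ht; linarith [this]

lemma rpow_split {ξ : ℝ} (hξ : 0 < ξ) (a : ℝ) : ξ * ξ^a = ξ^(1+a) := by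
  rw [Real.rpow_add hξ, Real.rpow_one]

lemma one_minus_cos_nonneg (t : ℝ) : 0 ≤ 1 - Real.cos t := by
  have := Real.cos_le_one t; linarith

lemma one_minus_cos_le_sq (t : ℝ) : 1 - Real.cos t ≤ t^2/2 := by
  have := Real.one_sub_sq_div_two_le_cos (x := t); linarith

end Aux

section Integ

variable {α x : ℝ}

lemma integ_main (hα3 : α < 3) (hx : 0 < x) :
    IntervalIntegrable (fun ξ : ℝ => Real.sin (x*ξ) * ξ ^ (1-α)) volume 0 1 := by
  have hdom : IntervalIntegrable (fun ξ : ℝ => x * ξ ^ (2-α)) volume 0 1 :=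
    (intervalIntegral.intervalIntegrable_rpow' (by linarith)).const_mul x
  refine hdom.mono_fun' ?_ ?_
  · have hcont : ContinuousOn (fun ξ : ℝ => Real.sin (x*ξ) * ξ ^ (1-α)) (Set.Ioc 0 1) := by
      intro ξ hξ
      exact (((Real.continuous_sin.comp (continuous_const.mul continuous_id)).continuousAt).mul
        (Real.continuousAt_rpow_const ξ (1-α) (Or.inl (ne_of_gt hξ.1)))).continuousWithinAt
    rw [Set.uIoc_of_le (zero_le_one)]
    exact hcont.aestronglyMeasurable measurableSet_Ioc
  · rw [Set.uIoc_of_le (zero_le_one)]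
    filter_upwards [ae_restrict_mem measurableSet_Ioc] with ξ hξ
    have hξ0 : (0:ℝ) < ξ := hξ.1
    have h1 : |Real.sin (x*ξ)| ≤ x * ξ := by
      have := Real.abs_sin_le_abs (x := x*ξ)
      rwa [abs_of_pos (mul_pos hx hξ0)] at this
    have h2 : (0:ℝ) ≤ ξ ^ (1-α) := Real.rpow_nonneg hξ0.le _
    have key : x * ξ * ξ ^ (1-α) = x * ξ ^ (2-α) := by
      rw [mul_assoc, rpow_split hξ0, show (1:ℝ)+(1-α) = 2-α by ring]
    calc ‖Real.sin (x*ξ) * ξ ^ (1-α)‖ = |Real.sin (x*ξ)| * ξ ^ (1-α) := by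
          rw [norm_mul, Real.norm_eq_abs, Real.norm_eq_abs, abs_of_nonneg h2]
      _ ≤ x * ξ * ξ ^ (1-α) := mul_le_mul_of_nonneg_right h1 h2
      _ = x * ξ ^ (2-α) := key

lemma integ_aux (hα3 : α < 3) (hx : 0 < x) :
    IntervalIntegrable (fun s : ℝ => s ^ (-α) * (1 - Real.cos (x*s))) volume 0 1 := by
  have hdom : IntervalIntegrable (fun s : ℝ => (x^2/2) * s ^ (2-α)) volume 0 1 :=
    (intervalIntegral.intervalIntegrable_rpow' (by linarith)).const_mul _
  refine hdom.mono_fun' ?_ ?_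
  · have hcont : ContinuousOn (fun s : ℝ => s ^ (-α) * (1 - Real.cos (x*s))) (Set.Ioc 0 1) := by
      intro s hs
      exact ((Real.continuousAt_rpow_const s (-α) (Or.inl (ne_of_gt hs.1))).mul
        ((continuous_const.sub (Real.continuous_cos.comp
          (continuous_const.mul continuous_id))).continuousAt)).continuousWithinAt
    rw [Set.uIoc_of_le (zero_le_one)]
    exact hcont.aestronglyMeasurable measurableSet_Ioc
  · rw [Set.uIoc_of_le (zero_le_one)]
    filter_upwards [ae_restrict_mem measurableSet_Ioc] with s hs
    have hs0 : (0:ℝ) < s := hs.1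
    have h2 : (0:ℝ) ≤ s ^ (-α) := Real.rpow_nonneg hs0.le _
    have h3 : 0 ≤ 1 - Real.cos (x*s) := one_minus_cos_nonneg _
    have h4 : 1 - Real.cos (x*s) ≤ (x*s)^2/2 := one_minus_cos_le_sq _
    have key : s ^ (-α) * ((x*s)^2/2) = x^2/2 * s^(2-α) := by
      have h5 : s^(-α) * s^2 = s^(2-α) := by
        rw [show (2:ℝ)-α = 1+(1+(-α)) by ring, ← rpow_split hs0, ← rpow_split hs0]
        ring
      calc s ^ (-α) * ((x*s)^2/2) = (x^2/2) * (s^(-α) * s^2) := by ring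
        _ = x^2/2 * s^(2-α) := by rw [h5]
    calc ‖s ^ (-α) * (1 - Real.cos (x*s))‖ = s ^ (-α) * (1 - Real.cos (x*s)) := by
          rw [Real.norm_eq_abs, abs_of_nonneg (mul_nonneg h2 h3)]
      _ ≤ s ^ (-α) * ((x*s)^2/2) := mul_le_mul_of_nonneg_left h4 h2
      _ = x^2/2 * s^(2-α) := key

end Integ
section IBP

variable {α x : ℝ}

lemma ibp (hα2 : 2 < α) (hx : 0 < x) {ε : ℝ} (hε : 0 < ε) (hε1 : ε ≤ 1) :
    ∫ ξ in ε..1, Real.sin (x*ξ) * ξ ^ (1-α)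
      = (1 - Real.cos x)/x - ε^(1-α) * ((1 - Real.cos (x*ε))/x)
        + ((α-1)/x) * ∫ s in ε..1, s ^ (-α) * (1 - Real.cos (x*s)) := by
  have huIcc : ∀ ξ ∈ Set.uIcc ε 1, (0:ℝ) < ξ := by
    intro ξ hξ
    rw [Set.uIcc_of_le hε1] at hξ
    exact lt_of_lt_of_le hε hξ.1
  have hu : ∀ ξ ∈ Set.uIcc ε 1, HasDerivAt (fun ξ : ℝ => ξ ^ (1-α))
      ((1-α) * ξ ^ (-α)) ξ := by
    intro ξ hξ
    have := Real.hasDerivAt_rpow_const (p := 1-α) (Or.inl (ne_of_gt (huIcc ξ hξ)))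
    convert this using 2
    rw [show (1-α)-1 = -α by ring]
  have hv : ∀ ξ ∈ Set.uIcc ε 1, HasDerivAt (fun ξ : ℝ => (1 - Real.cos (x*ξ))/x)
      (Real.sin (x*ξ)) ξ := by
    intro ξ _
    have h1 : HasDerivAt (fun ξ : ℝ => x*ξ) x ξ := by
      simpa using (hasDerivAt_id ξ).const_mul x
    have h2 := (Real.hasDerivAt_cos (x*ξ)).comp ξ h1
    have h3 := ((hasDerivAt_const ξ (1:ℝ)).sub h2).div_const x
    exact h3.congr_deriv (by field_simp; ring)
  have hu' : IntervalIntegrable (fun ξ : ℝ => (1-α) * ξ ^ (-α)) volume ε 1 := by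
    apply ContinuousOn.intervalIntegrable
    intro ξ hξ
    exact (continuousAt_const.mul
      (Real.continuousAt_rpow_const ξ (-α) (Or.inl (ne_of_gt (huIcc ξ hξ))))).continuousWithinAt
  have hv' : IntervalIntegrable (fun ξ : ℝ => Real.sin (x*ξ)) volume ε 1 :=
    (Real.continuous_sin.comp (continuous_const.mul continuous_id)).intervalIntegrable ε 1
  have := intervalIntegral.integral_mul_deriv_eq_deriv_mul hu hv hu' hv'
  have hcomm : ∫ ξ in ε..1, Real.sin (x*ξ) * ξ ^ (1-α)
      = ∫ ξ in ε..1, ξ ^ (1-α) * Real.sin (x*ξ) := by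
    apply intervalIntegral.integral_congr
    intro ξ _
    exact mul_comm _ _
  simp only [mul_one, Real.one_rpow] at this
  rw [hcomm, this]
  have hlast : ∫ ξ in ε..1, (1-α) * ξ ^ (-α) * ((1 - Real.cos (x*ξ))/x)
      = ((1-α)/x) * ∫ s in ε..1, s ^ (-α) * (1 - Real.cos (x*s)) := by
    rw [← intervalIntegral.integral_const_mul]
    apply intervalIntegral.integral_congr
    intro ξ _
    field_simp
  rw [hlast]
  set I := ∫ s in ε..1, s ^ (-α) * (1 - Real.cos (x*s)) with hI
  ring

lemma tendsto_lower (f : ℝ → ℝ) (hf : IntervalIntegrable f volume 0 1) :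
    Tendsto (fun ε => ∫ t in ε..1, f t) (nhdsWithin 0 (Set.Ioi 0))
      (nhds (∫ t in (0:ℝ)..1, f t)) := by
  have hInt : IntegrableOn f (Set.uIcc 0 1) volume := by
    rw [Set.uIcc_of_le zero_le_one]
    exact (integrableOn_Icc_iff_integrableOn_Ioc).2 hf.1
  have hcont := intervalIntegral.continuousOn_primitive_interval_left (f := f)
    (a := 0) (b := 1) (μ := volume) hInt
  have hcwa := hcont 0 (by rw [Set.uIcc_of_le zero_le_one]; exact Set.left_mem_Icc.2 zero_le_one)
  rw [ContinuousWithinAt] at hcwa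
  rw [← nhdsWithin_Ioc_eq_nhdsGT (zero_lt_one)]
  refine hcwa.mono_left (nhdsWithin_mono 0 ?_)
  rw [Set.uIcc_of_le zero_le_one]
  exact Set.Ioc_subset_Icc_self

lemma tendsto_boundary (hα2 : 2 < α) (hα3 : α < 3) (hx : 0 < x) :
    Tendsto (fun ε : ℝ => ε^(1-α) * ((1 - Real.cos (x*ε))/x)) (nhdsWithin 0 (Set.Ioi 0))
      (nhds 0) := by
  have hb : Tendsto (fun ε : ℝ => (x/2) * ε^(3-α)) (nhdsWithin 0 (Set.Ioi 0)) (nhds 0) := by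
    have h1 : Tendsto (fun ε : ℝ => ε^(3-α)) (nhds 0) (nhds ((0:ℝ)^(3-α))) :=
      (Real.continuousAt_rpow_const 0 (3-α) (Or.inr (by linarith))).tendsto
    rw [Real.zero_rpow (by intro h; linarith : (3:ℝ)-α ≠ 0)] at h1
    refine Tendsto.mono_left ?_ nhdsWithin_le_nhds
    simpa using h1.const_mul (x/2)
  apply squeeze_zero' ?_ ?_ hb
  · filter_upwards [self_mem_nhdsWithin] with ε (hε : 0 < ε)
    exact mul_nonneg (Real.rpow_nonneg hε.le _)
      (div_nonneg (one_minus_cos_nonneg _) hx.le)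
  · filter_upwards [self_mem_nhdsWithin] with ε (hε : 0 < ε)
    have h4 : 1 - Real.cos (x*ε) ≤ (x*ε)^2/2 := one_minus_cos_le_sq _
    have h2 : (0:ℝ) ≤ ε ^ (1-α) := Real.rpow_nonneg hε.le _
    have key : ε^(1-α) * ((x*ε)^2/2/x) = (x/2) * ε^(3-α) := by
      have h5 : ε^(1-α) * ε^2 = ε^(3-α) := by
        rw [show (3:ℝ)-α = 1+(1+(1-α)) by ring, ← rpow_split hε, ← rpow_split hε]
        ring
      have h6 : (x*ε)^2/2/x = (x/2)*ε^2 := by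
        field_simp
      rw [h6, show ε^(1-α) * ((x/2)*ε^2) = (x/2) * (ε^(1-α)*ε^2) by ring, h5]
    calc ε^(1-α) * ((1 - Real.cos (x*ε))/x) ≤ ε^(1-α) * ((x*ε)^2/2/x) := by
          gcongr
      _ = (x/2) * ε^(3-α) := key
section Main

variable {α x : ℝ}

lemma key_identity (hα2 : 2 < α) (hα3 : α < 3) (hx : 0 < x) :
    ∫ ξ in (0:ℝ)..1, Real.sin (x*ξ) * ξ ^ (1-α)
      = (1 - Real.cos x)/x + ((α-1)/x) * ∫ s in (0:ℝ)..1, s ^ (-α) * (1 - Real.cos (x*s)) := by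
  have hf := integ_main (α := α) hα3 hx
  have hg := integ_aux (α := α) hα3 hx
  have T1 := tendsto_lower _ hf
  have Tg := tendsto_lower _ hg
  have T2 := tendsto_boundary hα2 hα3 hx
  have TR : Tendsto (fun ε : ℝ => (1 - Real.cos x)/x - ε^(1-α) * ((1 - Real.cos (x*ε))/x)
      + ((α-1)/x) * ∫ s in ε..1, s ^ (-α) * (1 - Real.cos (x*s)))
      (nhdsWithin 0 (Set.Ioi 0))
      (nhds ((1 - Real.cos x)/x - 0
        + ((α-1)/x) * ∫ s in (0:ℝ)..1, s ^ (-α) * (1 - Real.cos (x*s)))) :=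
    (tendsto_const_nhds.sub T2).add (Tg.const_mul _)
  have hIoc : Set.Ioc (0:ℝ) 1 ∈ nhdsWithin (0:ℝ) (Set.Ioi 0) := by
    rw [← nhdsWithin_Ioc_eq_nhdsGT zero_lt_one]
    exact self_mem_nhdsWithin
  have heq : (fun ε : ℝ => (1 - Real.cos x)/x - ε^(1-α) * ((1 - Real.cos (x*ε))/x)
      + ((α-1)/x) * ∫ s in ε..1, s ^ (-α) * (1 - Real.cos (x*s)))
      =ᶠ[nhdsWithin (0:ℝ) (Set.Ioi 0)]
      (fun ε : ℝ => ∫ ξ in ε..1, Real.sin (x*ξ) * ξ ^ (1-α)) := by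
    filter_upwards [hIoc] with ε hε
    exact (ibp hα2 hx hε.1 hε.2).symm
  have := tendsto_nhds_unique T1 (TR.congr' heq)
  rw [this]
  ring

lemma Ilow (hα2 : 2 < α) (hα3 : α < 3) (hx : 0 < x) {c : ℝ}
    (hc : 0 < c) (hc1 : c ≤ 1) (hxc : x*c ≤ 3) :
    x^2*c/2 - x^4*c^3/72 ≤ ∫ s in (0:ℝ)..c, s ^ (-α) * (1 - Real.cos (x*s)) := by
  have hfpoly : IntervalIntegrable (fun s : ℝ => x^2/2 - x^4*s^2/24) volume 0 c := by
    apply Continuous.intervalIntegrable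
    continuity
  have hg' : IntervalIntegrable (fun s : ℝ => s ^ (-α) * (1 - Real.cos (x*s))) volume 0 c := by
    apply (integ_aux hα3 hx).mono_set'
    rw [Set.uIoc_of_le hc.le, Set.uIoc_of_le zero_le_one]
    exact Set.Ioc_subset_Ioc_right hc1
  have h0 : ∀ᵐ s ∂(volume.restrict (Set.Icc (0:ℝ) c)), s ≠ 0 := by
    have hglob : ∀ᵐ (s:ℝ), s ≠ 0 := by
      have hms : (volume : Measure ℝ) {(0:ℝ)} = 0 := measure_singleton 0
      rw [ae_iff]
      convert hms using 2
      ext s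
      simp
    exact hglob.filter_mono (ae_mono Measure.restrict_le_self)
  have hae : (fun s : ℝ => x^2/2 - x^4*s^2/24)
      ≤ᵐ[volume.restrict (Set.Icc (0:ℝ) c)] (fun s : ℝ => s ^ (-α) * (1 - Real.cos (x*s))) := by
    filter_upwards [ae_restrict_mem measurableSet_Icc, h0] with s hs hs0
    have hspos : 0 < s := lt_of_le_of_ne hs.1 (Ne.symm hs0)
    have hsc : s ≤ c := hs.2
    have hxs : x*s ≤ 3 := le_trans (mul_le_mul_of_nonneg_left hsc hx.le) hxc
    have hxs0 : 0 ≤ x*s := (mul_pos hx hspos).le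
    have h9 : (x*s)^2 ≤ 9 := by nlinarith
    have hB : 0 ≤ x^2/2 - x^4*s^2/24 := by nlinarith
    have hq := cos_le_quartic (x*s) hxs0
    have h1 : s^2 * (x^2/2 - x^4*s^2/24) ≤ 1 - Real.cos (x*s) := by nlinarith
    have h2 : (1:ℝ) ≤ s^(-α) * s^2 := by
      have e : s^(-α) * s^2 = s^(2-α) := by
        rw [show (2:ℝ)-α = 1+(1+(-α)) by ring, ← rpow_split hspos, ← rpow_split hspos]
        ring
      rw [e]
      exact Real.one_le_rpow_of_pos_of_le_one_of_nonpos hspos (hsc.trans hc1) (by linarith)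
    calc x^2/2 - x^4*s^2/24 = 1 * (x^2/2 - x^4*s^2/24) := (one_mul _).symm
      _ ≤ (s^(-α) * s^2) * (x^2/2 - x^4*s^2/24) := mul_le_mul_of_nonneg_right h2 hB
      _ = s^(-α) * (s^2 * (x^2/2 - x^4*s^2/24)) := by ring
      _ ≤ s^(-α) * (1 - Real.cos (x*s)) :=
          mul_le_mul_of_nonneg_left h1 (Real.rpow_nonneg hspos.le _)
  have hmono := intervalIntegral.integral_mono_ae_restrict hc.le hfpoly hg' hae
  have hpoly : ∫ s in (0:ℝ)..c, (x^2/2 - x^4*s^2/24) = x^2*c/2 - x^4*c^3/72 := by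
    have h1 : ∫ s in (0:ℝ)..c, (x^2/2 - x^4*s^2/24)
        = ∫ s in (0:ℝ)..c, (x^2/2 - (x^4/24)*s^2) :=
      intervalIntegral.integral_congr (fun s _ => by ring)
    rw [h1, intervalIntegral.integral_sub (g := fun s : ℝ => (x^4/24)*s^2) intervalIntegrable_const
      ((continuous_const.mul (continuous_pow 2)).intervalIntegrable _ _),
      intervalIntegral.integral_const, intervalIntegral.integral_const_mul, integral_pow]
    simp
    ring
  linarith [hmono, hpoly.symm.trans_le hmono]

theorem Kprime_lower_bounds (α : ℝ) (hα : α ∈ Set.Ioo (2:ℝ) 3)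
    (K' : ℝ → ℝ)
    (hK' : ∀ x : ℝ, K' x = ∫ ξ in (0:ℝ)..1, Real.sin (x * ξ) / ξ ^ (α - 1)) :
    ∀ x : ℝ, 0 < x →
      Real.sin x ≤ K' x ∧ (1 - Real.cos x) / x ≤ K' x := by
  obtain ⟨hα2, hα3⟩ := hα
  intro x hx
  set I := ∫ s in (0:ℝ)..1, s ^ (-α) * (1 - Real.cos (x*s)) with hIdef
  have hKid : K' x = (1 - Real.cos x)/x + ((α-1)/x) * I := by
    rw [hK' x]
    have hEqOn : Set.EqOn (fun ξ : ℝ => Real.sin (x * ξ) / ξ ^ (α - 1))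
        (fun ξ : ℝ => Real.sin (x * ξ) * ξ ^ (1 - α)) (Set.uIcc 0 1) := by
      intro ξ hξ
      rw [Set.uIcc_of_le zero_le_one] at hξ
      rcases eq_or_lt_of_le hξ.1 with h | h
      · simp [← h, Real.zero_rpow (by intro hcon; exact absurd hcon (by intro hc; linarith) : α-1 ≠ 0)]
      · show Real.sin (x*ξ) / ξ^(α-1) = Real.sin (x*ξ) * ξ^(1-α)
        rw [show (1:ℝ)-α = -(α-1) by ring, Real.rpow_neg (le_of_lt h), div_eq_mul_inv]
    rw [intervalIntegral.integral_congr hEqOn]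
    exact key_identity hα2 hα3 hx
  have hI0 : 0 ≤ I := by
    apply intervalIntegral.integral_nonneg zero_le_one
    intro s hs
    exact mul_nonneg (Real.rpow_nonneg hs.1 _) (one_minus_cos_nonneg _)
  have hfrac : 0 ≤ (α-1)/x := div_nonneg (by linarith) hx.le
  have hbound2 : (1 - Real.cos x)/x ≤ K' x := by
    rw [hKid]
    nlinarith [mul_nonneg hfrac hI0]
  refine ⟨?_, hbound2⟩
  by_cases hx3 : x ≤ 3
  · -- small x case
    have hIb := Ilow hα2 hα3 hx (c := 1) one_pos le_rfl (by linarith)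
    norm_num at hIb
    have hαI : I ≤ (α-1) * I := by nlinarith
    have hsin := sin_le_quintic x hx.le
    have hcos := cos_le_quartic x hx.le
    have h9 : x^2 ≤ 9 := by nlinarith
    have h5 : x * Real.sin x ≤ x*(x - x^3/6 + x^5/120) :=
      mul_le_mul_of_nonneg_left hsin hx.le
    have h6 : x^4 * x^2 ≤ x^4 * 9 := mul_le_mul_of_nonneg_left h9 (by positivity)
    have hxI : x * Real.sin x ≤ (1 - Real.cos x) + (α-1)*I := by nlinarith
    calc Real.sin x = (x * Real.sin x)/x := by field_simp
      _ ≤ ((1 - Real.cos x) + (α-1)*I)/x := by gcongr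
      _ = (1 - Real.cos x)/x + ((α-1)/x)*I := by ring
      _ = K' x := hKid.symm
  · -- large x case
    push_neg at hx3
    have hc : 0 < 3/x := by positivity
    have hc1 : 3/x ≤ 1 := by
      rw [div_le_one hx]
      linarith
    have hxc : x*(3/x) ≤ 3 := by
      rw [mul_div_cancel₀ _ hx.ne']
    have hIlow := Ilow hα2 hα3 hx hc hc1 hxc
    have hval : x^2*(3/x)/2 - x^4*(3/x)^3/72 = 9*x/8 := by
      field_simp
      ring
    rw [hval] at hIlow
    have h1int : IntervalIntegrable (fun s : ℝ => s ^ (-α) * (1 - Real.cos (x*s)))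
        volume 0 (3/x) := by
      apply (integ_aux hα3 hx).mono_set'
      rw [Set.uIoc_of_le hc.le, Set.uIoc_of_le zero_le_one]
      exact Set.Ioc_subset_Ioc_right hc1
    have h2int : IntervalIntegrable (fun s : ℝ => s ^ (-α) * (1 - Real.cos (x*s)))
        volume (3/x) 1 := by
      apply (integ_aux hα3 hx).mono_set'
      rw [Set.uIoc_of_le hc1, Set.uIoc_of_le zero_le_one]
      exact Set.Ioc_subset_Ioc_left hc.le
    have hsplit := intervalIntegral.integral_add_adjacent_intervals h1int h2int
    have htail : 0 ≤ ∫ s in (3/x)..1, s ^ (-α) * (1 - Real.cos (x*s)) := by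
      apply intervalIntegral.integral_nonneg hc1
      intro s hs
      exact mul_nonneg (Real.rpow_nonneg (le_trans hc.le hs.1) _) (one_minus_cos_nonneg _)
    have hI9 : 9*x/8 ≤ I := by
      rw [hIdef, ← hsplit]
      linarith
    have hfin : ((α-1)/x) * (9*x/8) ≤ ((α-1)/x) * I := mul_le_mul_of_nonneg_left hI9 hfrac
    have hval2 : ((α-1)/x) * (9*x/8) = (α-1)*9/8 := by
      field_simp
    have h1c : 0 ≤ (1 - Real.cos x)/x := div_nonneg (one_minus_cos_nonneg x) hx.le
    have hs1 : Real.sin x ≤ 1 := Real.sin_le_one x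
    rw [hKid]
    nlinarith [hfin, hval2]

end Main
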